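/- For every graph G, the induced path partition number is at most the zero forcing number: ρ_p(G) ≤ z(G). -/

import Mathlib

open SimpleGraph

variable {V : Type*}

/-- A walk is an induced path: it is a path and every adjacency between its
vertices is an edge of the walk. -/
def IsInducedWalk (G : SimpleGraph V) {u v : V} (p : G.Walk u v) : Prop :=
  p.IsPath ∧ ∀ a ∈ p.support, ∀ b ∈ p.support, G.Adj a b → s(a, b) ∈ p.edges

/-- A walk is an isometric (shortest) path between its endpoints. -/
def IsIsometricWalk (G : SimpleGraph V) {u v : V} (p : G.Walk u v) : Prop :=
  p.IsPath ∧ p.length = G.dist u v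

/-- A family of walks is a path cover: each walk is a path and every
vertex lies on at least one of the walks. -/
def IsPathCover (G : SimpleGraph V) {n : ℕ}
    (P : Fin n → Σ u : V, Σ v : V, G.Walk u v) : Prop :=
  (∀ i, (P i).2.2.IsPath) ∧ ∀ x : V, ∃ i, x ∈ (P i).2.2.support

/-- A family of walks is a path partition: each walk is a path and every
vertex lies on exactly one of the walks. -/
def IsPathPartition (G : SimpleGraph V) {n : ℕ}
    (P : Fin n → Σ u : V, Σ v : V, G.Walk u v) : Prop :=
  (∀ i, (P i).2.2.IsPath) ∧ ∀ x : V, ∃! i, x ∈ (P i).2.2.support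

/-- π_c : the path cover number. -/
noncomputable def pathCoverNum (G : SimpleGraph V) : ℕ :=
  sInf {n | ∃ P : Fin n → Σ u : V, Σ v : V, G.Walk u v, IsPathCover G P}

/-- ρ_c : the induced path cover number. -/
noncomputable def inducedPathCoverNum (G : SimpleGraph V) : ℕ :=
  sInf {n | ∃ P : Fin n → Σ u : V, Σ v : V, G.Walk u v,
    IsPathCover G P ∧ ∀ i, IsInducedWalk G (P i).2.2}

/-- ip_c : the isometric path cover number. -/
noncomputable def isometricPathCoverNum (G : SimpleGraph V) : ℕ :=
  sInf {n | ∃ P : Fin n → Σ u : V, Σ v : V, G.Walk u v,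
    IsPathCover G P ∧ ∀ i, IsIsometricWalk G (P i).2.2}

/-- π_p : the path partition number. -/
noncomputable def pathPartitionNum (G : SimpleGraph V) : ℕ :=
  sInf {n | ∃ P : Fin n → Σ u : V, Σ v : V, G.Walk u v, IsPathPartition G P}

/-- ρ_p : the induced path partition number. -/
noncomputable def inducedPathPartitionNum (G : SimpleGraph V) : ℕ :=
  sInf {n | ∃ P : Fin n → Σ u : V, Σ v : V, G.Walk u v,
    IsPathPartition G P ∧ ∀ i, IsInducedWalk G (P i).2.2}

/-- ip_p : the isometric path partition number. -/
noncomputable def isometricPathPartitionNum (G : SimpleGraph V) : ℕ :=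
  sInf {n | ∃ P : Fin n → Σ u : V, Σ v : V, G.Walk u v,
    IsPathPartition G P ∧ ∀ i, IsIsometricWalk G (P i).2.2}

/-- Zero forcing: starting from a blue set `B`, a blue vertex `u` whose only
non-blue neighbor is `v` forces `v` to become blue. `Forced G B v` means `v`
eventually becomes blue. -/
inductive Forced (G : SimpleGraph V) (B : Set V) : V → Prop
  | init : ∀ v, v ∈ B → Forced G B v
  | force : ∀ u v, Forced G B u → G.Adj u v →
      (∀ w, G.Adj u w → w ≠ v → Forced G B w) → Forced G B v

/-- z : the zero forcing number. -/
noncomputable def zeroForcingNum (G : SimpleGraph V) : ℕ :=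
  sInf {n | ∃ B : Finset V, B.card = n ∧ ∀ v : V, Forced G (↑B : Set V) v}

section ZFAux

open SimpleGraph Finset

variable {V : Type*}

/-- If `B` is contained in `S` and some forced vertex is outside `S`, then some force is
applicable from `S`. -/
lemma forced_step_aux (G : SimpleGraph V) (B : Set V) (S : Set V) (hBS : B ⊆ S) :
    ∀ v, Forced G B v → v ∉ S →
      ∃ u v', u ∈ S ∧ v' ∉ S ∧ G.Adj u v' ∧ ∀ w, G.Adj u w → w ≠ v' → w ∈ S := by
  intro v hv
  induction hv with
  | init v hvB => exact fun hvS => absurd (hBS hvB) hvS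
  | force u v hu hadj hall ihu ihall =>
    intro hvS
    by_cases huS : u ∈ S
    · by_cases hw : ∀ w, G.Adj u w → w ≠ v → w ∈ S
      · exact ⟨u, v, huS, hvS, hadj, hw⟩
      · push_neg at hw
        obtain ⟨w, hw1, hw2, hw3⟩ := hw
        exact ihall w hw1 hw2 hw3
    · exact ihu huS

variable [Fintype V] [DecidableEq V]

/-- A valid chronological sequence of forces starting from blue set `S`. -/
inductive ValidSeq (G : SimpleGraph V) : Finset V → List (V × V) → Prop
  | nil (S : Finset V) : ValidSeq G S []
  | cons (S : Finset V) (u v : V) (L : List (V × V)) :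
      u ∈ S → v ∉ S → G.Adj u v → (∀ w, G.Adj u w → w ≠ v → w ∈ S) →
      ValidSeq G (insert v S) L → ValidSeq G S ((u, v) :: L)

/-- The blue set after performing all forces of `L`. -/
def finalSet : Finset V → List (V × V) → Finset V
  | S, [] => S
  | S, (_, v) :: L => finalSet (insert v S) L

lemma mem_finalSet :
    ∀ (L : List (V × V)) (S : Finset V) (x : V),
      x ∈ finalSet S L ↔ x ∈ S ∨ ∃ i, ∃ hi : i < L.length, (L.get ⟨i, hi⟩).2 = x := by
  intro L
  induction L with
  | nil => intro S x; simp [finalSet]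
  | cons a L ih =>
    intro S x
    obtain ⟨u, v⟩ := a
    rw [finalSet, ih]
    constructor
    · rintro (hx | ⟨i, hi, hx⟩)
      · rcases Finset.mem_insert.1 hx with h | h
        · exact Or.inr ⟨0, by simp, h.symm⟩
        · exact Or.inl h
      · exact Or.inr ⟨i + 1, by simpa using hi, hx⟩
    · rintro (hx | ⟨i, hi, hx⟩)
      · exact Or.inl (Finset.mem_insert_of_mem hx)
      · match i with
        | 0 => exact Or.inl (Finset.mem_insert.2 (Or.inl hx.symm))
        | (i + 1) => exact Or.inr ⟨i, by simpa using hi, hx⟩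

lemma exists_validSeq (G : SimpleGraph V) (B : Finset V)
    (hB : ∀ v, Forced G (↑B : Set V) v) :
    ∀ (n : ℕ) (S : Finset V), (Finset.univ \ S).card ≤ n → B ⊆ S →
      ∃ L, ValidSeq G S L ∧ finalSet S L = Finset.univ := by
  intro n
  induction n with
  | zero =>
    intro S hcard hBS
    refine ⟨[], ValidSeq.nil S, ?_⟩
    have : Finset.univ \ S = ∅ := Finset.card_eq_zero.1 (Nat.le_zero.1 hcard)
    have hS : ∀ x : V, x ∈ S := by
      intro x
      by_contra hx
      have hmem : x ∈ Finset.univ \ S := Finset.mem_sdiff.2 ⟨Finset.mem_univ x, hx⟩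
      rw [this] at hmem
      exact absurd hmem (Finset.notMem_empty x)
    exact Finset.eq_univ_iff_forall.2 hS
  | succ n ih =>
    intro S hcard hBS
    by_cases hS : ∀ x : V, x ∈ S
    · exact ⟨[], ValidSeq.nil S, Finset.eq_univ_iff_forall.2 hS⟩
    · push_neg at hS
      obtain ⟨v, hv⟩ := hS
      have hBS' : (↑B : Set V) ⊆ (↑S : Set V) := by exact_mod_cast hBS
      obtain ⟨u, v', hu, hv', hadj, hw⟩ :=
        forced_step_aux G ↑B ↑S hBS' v (hB v) (by simpa using hv)
      have hu' : u ∈ S := by simpa using hu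
      have hv'' : v' ∉ S := by simpa using hv'
      have hw' : ∀ w, G.Adj u w → w ≠ v' → w ∈ S := by
        intro w h1 h2; simpa using hw w h1 h2
      have hlt : (Finset.univ \ insert v' S).card < (Finset.univ \ S).card := by
        apply Finset.card_lt_card
        constructor
        · intro x hx
          simp only [Finset.mem_sdiff, Finset.mem_insert] at hx ⊢
          exact ⟨hx.1, fun h => hx.2 (Or.inr h)⟩
        · intro hsub
          have : v' ∈ Finset.univ \ S := by simp [hv'']
          have := hsub this
          simp at this
      obtain ⟨L, hL, hfin⟩ := ih (insert v' S) (by omega)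
        (hBS.trans (Finset.subset_insert _ _))
      exact ⟨(u, v') :: L, ValidSeq.cons S u v' L hu' hv'' hadj hw' hL, hfin⟩

/-- `w` is in the blue set just before the `i`-th force. -/
def Before (S : Finset V) (L : List (V × V)) (i : ℕ) (w : V) : Prop :=
  w ∈ S ∨ ∃ j, ∃ hj : j < L.length, j < i ∧ (L.get ⟨j, hj⟩).2 = w

lemma before_cons (S : Finset V) (u v : V) (L : List (V × V)) (i : ℕ) (w : V) :
    Before (insert v S) L i w ↔ Before S ((u, v) :: L) (i + 1) w := by
  unfold Before
  constructor
  · rintro (hw | ⟨j, hj, hlt, heq⟩)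
    · rcases Finset.mem_insert.1 hw with h | h
      · exact Or.inr ⟨0, by simp, by omega, h.symm⟩
      · exact Or.inl h
    · exact Or.inr ⟨j + 1, by simpa using hj, by omega, heq⟩
  · rintro (hw | ⟨j, hj, hlt, heq⟩)
    · exact Or.inl (Finset.mem_insert_of_mem hw)
    · match j with
      | 0 => exact Or.inl (Finset.mem_insert.2 (Or.inl heq.symm))
      | (j + 1) => exact Or.inr ⟨j, by simpa using hj, by omega, heq⟩

lemma before_mono (S : Finset V) (L : List (V × V)) {i i' : ℕ} (h : i ≤ i') (w : V) :
    Before S L i w → Before S L i' w := by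
  rintro (hw | ⟨j, hj, hlt, heq⟩)
  · exact Or.inl hw
  · exact Or.inr ⟨j, hj, by omega, heq⟩

lemma validSeq_get (G : SimpleGraph V) :
    ∀ (L : List (V × V)) (S : Finset V), ValidSeq G S L →
      ∀ (i : ℕ) (hi : i < L.length),
        Before S L i (L.get ⟨i, hi⟩).1 ∧ ¬ Before S L i (L.get ⟨i, hi⟩).2 ∧
        G.Adj (L.get ⟨i, hi⟩).1 (L.get ⟨i, hi⟩).2 ∧
        ∀ w, G.Adj (L.get ⟨i, hi⟩).1 w → w ≠ (L.get ⟨i, hi⟩).2 → Before S L i w := by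
  intro L
  induction L with
  | nil => intro S h i hi; simp at hi
  | cons a L ih =>
    intro S h i hi
    cases h with
    | cons S u v L hu hv hadj hw hL =>
      match i with
      | 0 =>
        have hb : ∀ w : V, Before S ((u, v) :: L) 0 w ↔ w ∈ S := by
          intro w
          unfold Before
          constructor
          · rintro (h | ⟨j, hj, hlt, _⟩)
            · exact h
            · omega
          · exact Or.inl
        refine ⟨(hb u).2 hu, fun hc => hv ((hb v).1 hc), hadj, fun w h1 h2 => (hb w).2 (hw w h1 h2)⟩
      | (i + 1) =>
        obtain ⟨h1, h2, h3, h4⟩ := ih (insert v S) hL i (by simpa using hi)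
        refine ⟨(before_cons S u v L i _).1 h1, fun hc => h2 ((before_cons S u v L i _).2 ?_), h3,
          fun w hw1 hw2 => (before_cons S u v L i w).1 (h4 w hw1 hw2)⟩
        exact hc

end ZFAux

section ZFExtract
set_option linter.unusedSectionVars false

open SimpleGraph

variable {V : Type*} [Fintype V] [DecidableEq V]
variable {G : SimpleGraph V} {B : Finset V} {L : List (V × V)}


lemma get_congr {α : Type*} (L : List α) {a b : ℕ} (ha : a < L.length) (hb : b < L.length)
    (h : a = b) : L.get ⟨a, ha⟩ = L.get ⟨b, hb⟩ := by subst h; rfl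

lemma snd_inj (hL : ValidSeq G B L) {i j : ℕ} (hi : i < L.length) (hj : j < L.length)
    (h : (L.get ⟨i, hi⟩).2 = (L.get ⟨j, hj⟩).2) : i = j := by
  by_contra hne
  wlog hlt : i < j generalizing i j
  · exact this hj hi h.symm (Ne.symm hne) (by omega)
  exact (validSeq_get G L B hL j hj).2.1 (Or.inr ⟨i, hi, hlt, h⟩)

lemma snd_not_mem (hL : ValidSeq G B L) {i : ℕ} (hi : i < L.length) :
    (L.get ⟨i, hi⟩).2 ∉ B :=
  fun h => (validSeq_get G L B hL i hi).2.1 (Or.inl h)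

lemma fst_inj (hL : ValidSeq G B L) {i j : ℕ} (hi : i < L.length) (hj : j < L.length)
    (h : (L.get ⟨i, hi⟩).1 = (L.get ⟨j, hj⟩).1) : i = j := by
  by_contra hne
  wlog hlt : i < j generalizing i j
  · exact this hj hi h.symm (Ne.symm hne) (by omega)
  obtain ⟨-, hnb, hadj, -⟩ := validSeq_get G L B hL j hj
  have hcl := (validSeq_get G L B hL i hi).2.2.2
  have hne2 : (L.get ⟨j, hj⟩).2 ≠ (L.get ⟨i, hi⟩).2 := by
    intro e
    exact (by omega : ¬ j = i) (snd_inj hL hj hi e)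
  have hb : Before B L i (L.get ⟨j, hj⟩).2 := hcl _ (h ▸ hadj) hne2
  exact hnb (before_mono B L (le_of_lt hlt) _ hb)

/-- The parent map extracted from a force sequence. -/
noncomputable def parOf (L : List (V × V)) (x : V) : Option V := by
  classical
  exact if h : ∃ i, ∃ hi : i < L.length, (L.get ⟨i, hi⟩).2 = x then
    some (L.get ⟨h.choose, h.choose_spec.choose⟩).1
  else none

/-- The child map extracted from a force sequence. -/
noncomputable def chdOf (L : List (V × V)) (u : V) : Option V := by
  classical
  exact if h : ∃ i, ∃ hi : i < L.length, (L.get ⟨i, hi⟩).1 = u then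
    some (L.get ⟨h.choose, h.choose_spec.choose⟩).2
  else none

/-- The time at which a vertex gets forced (`0` for initial vertices). -/
noncomputable def tOf (L : List (V × V)) (x : V) : ℕ := by
  classical
  exact if h : ∃ i, ∃ hi : i < L.length, (L.get ⟨i, hi⟩).2 = x then h.choose + 1 else 0

lemma parOf_eq_some_iff (hL : ValidSeq G B L) {x u : V} :
    parOf L x = some u ↔ ∃ i, ∃ hi : i < L.length, L.get ⟨i, hi⟩ = (u, x) := by
  unfold parOf
  split
  · rename_i h
    obtain ⟨hi0, hx0⟩ := h.choose_spec
    simp only [Option.some.injEq]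
    constructor
    · intro he
      exact ⟨h.choose, h.choose_spec.choose, Prod.ext (by exact he) (by exact hx0)⟩
    · rintro ⟨i, hi, heq⟩
      have h2 : (L.get ⟨h.choose, h.choose_spec.choose⟩).2 = (L.get ⟨i, hi⟩).2 := by
        rw [heq]; exact hx0
      have h3 := snd_inj hL h.choose_spec.choose hi h2
      rw [get_congr L h.choose_spec.choose hi h3, heq]
  · rename_i h
    simp only [reduceCtorEq, false_iff]
    rintro ⟨i, hi, heq⟩
    exact h ⟨i, hi, by rw [heq]⟩

lemma chdOf_eq_some_iff (hL : ValidSeq G B L) {x u : V} :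
    chdOf L u = some x ↔ ∃ i, ∃ hi : i < L.length, L.get ⟨i, hi⟩ = (u, x) := by
  unfold chdOf
  split
  · rename_i h
    obtain ⟨hi0, hx0⟩ := h.choose_spec
    simp only [Option.some.injEq]
    constructor
    · intro he
      exact ⟨h.choose, h.choose_spec.choose, Prod.ext (by exact hx0) (by exact he)⟩
    · rintro ⟨i, hi, heq⟩
      have h2 : (L.get ⟨h.choose, h.choose_spec.choose⟩).1 = (L.get ⟨i, hi⟩).1 := by
        rw [heq]; exact hx0
      have h3 := fst_inj hL h.choose_spec.choose hi h2
      rw [get_congr L h.choose_spec.choose hi h3, heq]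
  · rename_i h
    simp only [reduceCtorEq, false_iff]
    rintro ⟨i, hi, heq⟩
    exact h ⟨i, hi, by rw [heq]⟩

lemma parOf_eq_none_iff {x : V} :
    parOf L x = none ↔ ¬ ∃ i, ∃ hi : i < L.length, (L.get ⟨i, hi⟩).2 = x := by
  unfold parOf
  split
  · rename_i h; exact iff_of_false (by simp) (not_not_intro h)
  · rename_i h; exact iff_of_true rfl h

lemma tOf_eq (hL : ValidSeq G B L) {i : ℕ} (hi : i < L.length) :
    tOf L (L.get ⟨i, hi⟩).2 = i + 1 := by
  unfold tOf
  split
  · rename_i h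
    obtain ⟨hi0, hx0⟩ := h.choose_spec
    have := snd_inj hL h.choose_spec.choose hi hx0
    omega
  · rename_i h
    exact absurd ⟨i, hi, rfl⟩ h

lemma tOf_of_mem (hL : ValidSeq G B L) {x : V} (hx : x ∈ B) : tOf L x = 0 := by
  unfold tOf
  split
  · rename_i h
    obtain ⟨hi0, hx0⟩ := h.choose_spec
    exact absurd (hx0 ▸ hx) (snd_not_mem hL _)
  · rfl

lemma tOf_before (hL : ValidSeq G B L) {i : ℕ} {w : V} (h : Before B L i w) :
    tOf L w ≤ i := by
  rcases h with hw | ⟨j, hj, hlt, heq⟩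
  · rw [tOf_of_mem hL hw]; omega
  · rw [← heq, tOf_eq hL hj]; omega

lemma chdOf_adj (hL : ValidSeq G B L) {u v : V} (h : chdOf L u = some v) : G.Adj u v := by
  obtain ⟨i, hi, heq⟩ := (chdOf_eq_some_iff hL).1 h
  have := (validSeq_get G L B hL i hi).2.2.1
  rwa [heq] at this

lemma chdOf_t_lt (hL : ValidSeq G B L) {u v : V} (h : chdOf L u = some v) :
    tOf L u < tOf L v := by
  obtain ⟨i, hi, heq⟩ := (chdOf_eq_some_iff hL).1 h
  have h1 := (validSeq_get G L B hL i hi).1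
  have h2 := tOf_eq hL hi
  rw [heq] at h1 h2
  dsimp only at h1 h2
  have := tOf_before hL h1
  omega

lemma chdOf_closed (hL : ValidSeq G B L) {u v : V} (h : chdOf L u = some v)
    {w : V} (hadj : G.Adj u w) (hne : w ≠ v) : tOf L w < tOf L v := by
  obtain ⟨i, hi, heq⟩ := (chdOf_eq_some_iff hL).1 h
  have h1 := (validSeq_get G L B hL i hi).2.2.2
  have h2 := tOf_eq hL hi
  rw [heq] at h1 h2
  dsimp only at h1 h2
  have := tOf_before hL (h1 w hadj hne)
  omega

lemma parOf_chdOf (hL : ValidSeq G B L) {x u : V} (h : parOf L x = some u) :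
    chdOf L u = some x :=
  (chdOf_eq_some_iff hL).2 ((parOf_eq_some_iff hL).1 h)

lemma chdOf_parOf (hL : ValidSeq G B L) {x u : V} (h : chdOf L u = some x) :
    parOf L x = some u :=
  (parOf_eq_some_iff hL).2 ((chdOf_eq_some_iff hL).1 h)

lemma parOf_eq_none_iff_mem (hL : ValidSeq G B L) (hfin : finalSet B L = Finset.univ)
    {x : V} : parOf L x = none ↔ x ∈ B := by
  rw [parOf_eq_none_iff]
  constructor
  · intro h
    have hx : x ∈ finalSet B L := hfin ▸ Finset.mem_univ x
    rcases (mem_finalSet L B x).1 hx with h' | ⟨i, hi, heq⟩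
    · exact h'
    · exact absurd ⟨i, hi, heq⟩ h
  · rintro hx ⟨i, hi, heq⟩
    exact snd_not_mem hL hi (heq ▸ hx)

end ZFExtract

section ZFWalk
set_option linter.unusedSectionVars false

open SimpleGraph

variable {V : Type*} [Fintype V] [DecidableEq V]

/-- Follow the child map for at most `n` steps, producing a walk. -/
noncomputable def chainWalk (G : SimpleGraph V) (chd : V → Option V)
    (hadj : ∀ u v, chd u = some v → G.Adj u v) : (n : ℕ) → (a : V) → Σ v : V, G.Walk a v
  | 0, a => ⟨a, SimpleGraph.Walk.nil⟩
  | n + 1, a =>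
    match h : chd a with
    | none => ⟨a, SimpleGraph.Walk.nil⟩
    | some v =>
      ⟨(chainWalk G chd hadj n v).1,
        SimpleGraph.Walk.cons (hadj a v h) (chainWalk G chd hadj n v).2⟩

variable {G : SimpleGraph V} {chd : V → Option V} {hadj : ∀ u v, chd u = some v → G.Adj u v}

lemma chainWalk_succ_none {n : ℕ} {a : V} (h : chd a = none) :
    chainWalk G chd hadj (n + 1) a = ⟨a, SimpleGraph.Walk.nil⟩ := by
  rw [chainWalk]
  split
  · rfl
  · rename_i v heq; rw [h] at heq; cases heq

lemma chainWalk_succ_some {n : ℕ} {a v : V} (h : chd a = some v) :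
    chainWalk G chd hadj (n + 1) a =
      ⟨(chainWalk G chd hadj n v).1,
        SimpleGraph.Walk.cons (hadj a v h) (chainWalk G chd hadj n v).2⟩ := by
  rw [chainWalk]
  split
  · rename_i heq; rw [h] at heq; cases heq
  · rename_i v' heq
    rw [h] at heq
    cases heq
    rfl

end ZFWalk

section ZFWalk2
set_option linter.unusedSectionVars false

open SimpleGraph

variable {V : Type*} [Fintype V] [DecidableEq V]
variable {G : SimpleGraph V} {chd : V → Option V} {hadj : ∀ u v, chd u = some v → G.Adj u v}
variable {t : V → ℕ}

lemma chainWalk_chain' (hct : ∀ u v, chd u = some v → t u < t v) :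
    ∀ (n : ℕ) (a : V),
      List.Chain' (fun x y => t x < t y) (chainWalk G chd hadj n a).2.support := by
  intro n
  induction n with
  | zero => intro a; simp [chainWalk, List.Chain']
  | succ n ih =>
    intro a
    cases h : chd a with
    | none => rw [chainWalk_succ_none h]; simp [List.Chain']
    | some v =>
      rw [chainWalk_succ_some h]
      dsimp only
      rw [Walk.support_cons, Walk.support_eq_cons ((chainWalk G chd hadj n v).2),
        List.Chain', List.isChain_cons_cons]
      refine ⟨hct a v h, ?_⟩
      rw [← Walk.support_eq_cons]
      exact ih v

lemma chainWalk_pairwise (hct : ∀ u v, chd u = some v → t u < t v) (n : ℕ) (a : V) :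
    List.Pairwise (fun x y => t x < t y) (chainWalk G chd hadj n a).2.support := by
  haveI : IsTrans V (fun x y => t x < t y) := ⟨fun a b c => Nat.lt_trans⟩
  exact List.isChain_iff_pairwise.1 (chainWalk_chain' hct n a)

lemma chainWalk_nodup (hct : ∀ u v, chd u = some v → t u < t v) (n : ℕ) (a : V) :
    (chainWalk G chd hadj n a).2.support.Nodup :=
  (chainWalk_pairwise hct n a).imp fun {a b} (h : t a < t b) (e : a = b) =>
    absurd (e ▸ h) (lt_irrefl _)

lemma chainWalk_isPath (hct : ∀ u v, chd u = some v → t u < t v) (n : ℕ) (a : V) :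
    (chainWalk G chd hadj n a).2.IsPath :=
  Walk.IsPath.mk' (chainWalk_nodup hct n a)

lemma chainWalk_head_le (hct : ∀ u v, chd u = some v → t u < t v) (n : ℕ) (a : V) :
    ∀ x ∈ (chainWalk G chd hadj n a).2.support, t a ≤ t x := by
  have hp := chainWalk_pairwise (hadj := hadj) hct n a
  rw [Walk.support_eq_cons] at hp
  intro x hx
  rw [Walk.support_eq_cons] at hx
  rcases List.mem_cons.1 hx with h | h
  · exact le_of_eq (by rw [h])
  · exact le_of_lt ((List.pairwise_cons.1 hp).1 x h)

lemma chainWalk_end (n : ℕ) (a : V) :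
    chd (chainWalk G chd hadj n a).1 = none ∨
      (chainWalk G chd hadj n a).2.support.length = n + 1 := by
  induction n generalizing a with
  | zero => exact Or.inr (by simp [chainWalk])
  | succ n ih =>
    cases h : chd a with
    | none => rw [chainWalk_succ_none h]; exact Or.inl h
    | some v =>
      rw [chainWalk_succ_some h]
      dsimp only
      rcases ih v with h' | h'
      · exact Or.inl h'
      · exact Or.inr (by rw [Walk.support_cons, List.length_cons, h'])

lemma chainWalk_end_none (hct : ∀ u v, chd u = some v → t u < t v) (a : V) :
    chd (chainWalk G chd hadj (Fintype.card V) a).1 = none := by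
  rcases chainWalk_end (Fintype.card V) a with h | h
  · exact h
  · exfalso
    have := (chainWalk_nodup (hadj := hadj) hct (Fintype.card V) a).length_le_card
    omega

lemma chainWalk_closed :
    ∀ (n : ℕ) (a : V), chd (chainWalk G chd hadj n a).1 = none →
      ∀ u v, u ∈ (chainWalk G chd hadj n a).2.support → chd u = some v →
        v ∈ (chainWalk G chd hadj n a).2.support := by
  intro n
  induction n with
  | zero =>
    intro a hend u v hu hc
    simp only [chainWalk, Walk.support_nil, List.mem_singleton] at hu ⊢
    subst hu
    rw [show chd u = none from hend] at hc
    cases hc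
  | succ n ih =>
    intro a hend u v hu hc
    cases h : chd a with
    | none =>
      rw [chainWalk_succ_none h] at hu ⊢
      simp only [Walk.support_nil, List.mem_singleton] at hu ⊢
      subst hu
      rw [h] at hc
      cases hc
    | some v0 =>
      rw [chainWalk_succ_some h] at hu hend ⊢
      dsimp only at hu hend ⊢
      rw [Walk.support_cons] at hu ⊢
      rcases List.mem_cons.1 hu with h' | h'
      · subst h'
        rw [h] at hc
        cases hc
        exact List.mem_cons_of_mem _ (Walk.start_mem_support _)
      · exact List.mem_cons_of_mem _ (ih v0 hend u v h' hc)

lemma chainWalk_induced (hct : ∀ u v, chd u = some v → t u < t v)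
    (hcl : ∀ u v, chd u = some v → ∀ w, G.Adj u w → w ≠ v → t w < t v) :
    ∀ (n : ℕ) (a : V), ∀ x ∈ (chainWalk G chd hadj n a).2.support,
      ∀ y ∈ (chainWalk G chd hadj n a).2.support, G.Adj x y →
        s(x, y) ∈ (chainWalk G chd hadj n a).2.edges := by
  intro n
  induction n with
  | zero =>
    intro a x hx y hy hxy
    simp only [chainWalk, Walk.support_nil, List.mem_singleton] at hx hy
    subst hx; subst hy
    exact absurd rfl hxy.ne
  | succ n ih =>
    intro a x hx y hy hxy
    cases h : chd a with
    | none =>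
      rw [chainWalk_succ_none h] at hx hy ⊢
      simp only [Walk.support_nil, List.mem_singleton] at hx hy
      subst hx; subst hy
      exact absurd rfl hxy.ne
    | some v0 =>
      rw [chainWalk_succ_some h] at hx hy ⊢
      dsimp only at hx hy ⊢
      rw [Walk.support_cons] at hx hy
      rw [Walk.edges_cons]
      rcases List.mem_cons.1 hx with hx' | hx' <;> rcases List.mem_cons.1 hy with hy' | hy'
      · subst hx'; subst hy'; exact absurd rfl hxy.ne
      · subst hx'
        by_cases hyv : y = v0
        · subst hyv; exact List.mem_cons_self
        · exfalso
          have h1 := hcl x v0 h y hxy hyv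
          have h2 := chainWalk_head_le (hadj := hadj) hct n v0 y hy'
          omega
      · subst hy'
        rw [Sym2.eq_swap]
        by_cases hxv : x = v0
        · subst hxv; exact List.mem_cons_self
        · exfalso
          have h1 := hcl y v0 h x hxy.symm hxv
          have h2 := chainWalk_head_le (hadj := hadj) hct n v0 x hx'
          omega
      · exact List.mem_cons_of_mem _ (ih v0 x hx' y hy' hxy)

end ZFWalk2

section ZFRoot
set_option linter.unusedSectionVars false

open SimpleGraph

variable {V : Type*} [Fintype V] [DecidableEq V]

/-- Follow the parent map for at most `n` steps. -/
noncomputable def rootAux (par : V → Option V) : ℕ → V → V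
  | 0, x => x
  | n + 1, x =>
    match par x with
    | none => x
    | some u => rootAux par n u

/-- The root (initial blue vertex) of the chain through `x`. -/
noncomputable def rootOf (par : V → Option V) (t : V → ℕ) (x : V) : V :=
  rootAux par (t x + 1) x

variable {par : V → Option V} {t : V → ℕ}

lemma rootAux_stable (hpt : ∀ x u, par x = some u → t u < t x) :
    ∀ (n m : ℕ) (x : V), t x < n → t x < m → rootAux par n x = rootAux par m x := by
  intro n
  induction n with
  | zero => intro m x h; omega
  | succ n ih =>
    intro m x hn hm
    match m with
    | 0 => omega
    | m + 1 =>
      rw [rootAux, rootAux]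
      cases h : par x with
      | none => rfl
      | some u =>
        have := hpt x u h
        exact ih m u (by omega) (by omega)

lemma rootOf_none {x : V} (h : par x = none) : rootOf par t x = x := by
  rw [rootOf, rootAux, h]

lemma rootOf_some (hpt : ∀ x u, par x = some u → t u < t x) {x u : V} (h : par x = some u) :
    rootOf par t x = rootOf par t u := by
  rw [rootOf, rootAux, h]
  exact rootAux_stable hpt _ _ u (hpt x u h) (by omega)

lemma rootOf_mem {B : Finset V} (hpt : ∀ x u, par x = some u → t u < t x)
    (hpn : ∀ x, par x = none ↔ x ∈ B) :
    ∀ (n : ℕ) (x : V), t x ≤ n → rootOf par t x ∈ B := by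
  intro n
  induction n with
  | zero =>
    intro x hx
    cases h : par x with
    | none => rw [rootOf_none h]; exact (hpn x).1 h
    | some u => have := hpt x u h; omega
  | succ n ih =>
    intro x hx
    cases h : par x with
    | none => rw [rootOf_none h]; exact (hpn x).1 h
    | some u =>
      rw [rootOf_some hpt h]
      exact ih u (by have := hpt x u h; omega)

variable {G : SimpleGraph V} {chd : V → Option V} {hadj : ∀ u v, chd u = some v → G.Adj u v}

lemma mem_chain_rootOf (hct : ∀ u v, chd u = some v → t u < t v)
    (hpt : ∀ x u, par x = some u → t u < t x)
    (hpc : ∀ x u, par x = some u → chd u = some x) :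
    ∀ (n : ℕ) (x : V), t x ≤ n →
      x ∈ (chainWalk G chd hadj (Fintype.card V) (rootOf par t x)).2.support := by
  intro n
  induction n with
  | zero =>
    intro x hx
    cases h : par x with
    | none => rw [rootOf_none h]; exact Walk.start_mem_support _
    | some u => have := hpt x u h; omega
  | succ n ih =>
    intro x hx
    cases h : par x with
    | none => rw [rootOf_none h]; exact Walk.start_mem_support _
    | some u =>
      rw [rootOf_some hpt h]
      have hu := ih u (by have := hpt x u h; omega)
      exact chainWalk_closed (Fintype.card V) (rootOf par t u)
        (chainWalk_end_none hct _) u x hu (hpc x u h)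

lemma rootOf_of_mem_chain (hpt : ∀ x u, par x = some u → t u < t x)
    (hcp : ∀ u x, chd u = some x → par x = some u) :
    ∀ (n : ℕ) (a : V), ∀ x ∈ (chainWalk G chd hadj n a).2.support,
      rootOf par t x = rootOf par t a := by
  intro n
  induction n with
  | zero =>
    intro a x hx
    simp only [chainWalk, Walk.support_nil, List.mem_singleton] at hx
    rw [hx]
  | succ n ih =>
    intro a x hx
    cases h : chd a with
    | none =>
      rw [chainWalk_succ_none h] at hx
      simp only [Walk.support_nil, List.mem_singleton] at hx
      rw [hx]
    | some v0 =>
      rw [chainWalk_succ_some h] at hx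
      dsimp only at hx
      rw [Walk.support_cons] at hx
      rcases List.mem_cons.1 hx with h' | h'
      · rw [h']
      · rw [ih v0 x h', rootOf_some hpt (hcp a v0 h)]

lemma abstract_partition (G : SimpleGraph V) (B : Finset V) (chd par : V → Option V) (t : V → ℕ)
    (hadj : ∀ u v, chd u = some v → G.Adj u v)
    (hct : ∀ u v, chd u = some v → t u < t v)
    (hcl : ∀ u v, chd u = some v → ∀ w, G.Adj u w → w ≠ v → t w < t v)
    (hpc : ∀ x u, par x = some u → chd u = some x)
    (hcp : ∀ u x, chd u = some x → par x = some u)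
    (hpn : ∀ x, par x = none ↔ x ∈ B) :
    ∃ P : Fin B.card → Σ u : V, Σ v : V, G.Walk u v,
      IsPathPartition G P ∧ ∀ i, IsInducedWalk G (P i).2.2 := by
  have hpt : ∀ x u, par x = some u → t u < t x := fun x u h => hct u x (hpc x u h)
  refine ⟨fun i => ⟨(B.equivFin.symm i : V), chainWalk G chd hadj (Fintype.card V) _⟩,
    ⟨fun i => chainWalk_isPath hct _ _, fun x => ?_⟩,
    fun i => ⟨chainWalk_isPath hct _ _,
      fun a ha b hb hab => chainWalk_induced hct hcl _ _ a ha b hb hab⟩⟩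
  have hrB : rootOf par t x ∈ B := rootOf_mem hpt hpn (t x) x le_rfl
  refine ⟨B.equivFin ⟨rootOf par t x, hrB⟩, ?_, ?_⟩
  · have hco : (B.equivFin.symm (B.equivFin ⟨rootOf par t x, hrB⟩) : V) = rootOf par t x := by
      rw [Equiv.symm_apply_apply]
    dsimp only
    rw [hco]
    exact mem_chain_rootOf hct hpt hpc (t x) x le_rfl
  · intro j hj
    dsimp only at hj
    have h1 : rootOf par t x = rootOf par t (B.equivFin.symm j : V) :=
      rootOf_of_mem_chain hpt hcp _ _ x hj
    have h2 : rootOf par t (B.equivFin.symm j : V) = (B.equivFin.symm j : V) :=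
      rootOf_none ((hpn _).2 (B.equivFin.symm j).2)
    have h3 : (⟨rootOf par t x, hrB⟩ : {y // y ∈ B}) = B.equivFin.symm j :=
      Subtype.ext (h1.trans h2)
    rw [h3, Equiv.apply_symm_apply]

end ZFRoot

lemma inducedPathPartition_le_of_forcing {V : Type*} [Fintype V] [DecidableEq V]
    (G : SimpleGraph V) (B : Finset V) (hB : ∀ v, Forced G (↑B : Set V) v) :
    inducedPathPartitionNum G ≤ B.card := by
  obtain ⟨L, hL, hfin⟩ :=
    exists_validSeq G B hB (Finset.univ \ B).card B le_rfl (Finset.Subset.refl B)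
  obtain ⟨P, hP1, hP2⟩ := abstract_partition G B (chdOf L) (parOf L) (tOf L)
    (fun u v h => chdOf_adj hL h) (fun u v h => chdOf_t_lt hL h)
    (fun u v h w h1 h2 => chdOf_closed hL h h1 h2)
    (fun x u h => parOf_chdOf hL h) (fun u x h => chdOf_parOf hL h)
    (fun x => parOf_eq_none_iff_mem hL hfin)
  unfold inducedPathPartitionNum
  exact Nat.sInf_le ⟨P, hP1, hP2⟩

theorem stmt_19 {V : Type*} [Fintype V] (G : SimpleGraph V) :
    inducedPathPartitionNum G ≤ zeroForcingNum G := by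
  classical
  have hne : {n | ∃ B : Finset V, B.card = n ∧ ∀ v : V, Forced G (↑B : Set V) v}.Nonempty :=
    ⟨(Finset.univ : Finset V).card, Finset.univ, rfl, fun v => Forced.init v (by simp)⟩
  obtain ⟨B, hcard, hB⟩ := Nat.sInf_mem hne
  rw [zeroForcingNum, ← hcard]
  exact inducedPathPartition_le_of_forcing G B hB
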